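/- For real constants c₁, c₂, c₃, c₄ and m with m ≠ −1, define on an interval where f is positive, f' nonvanishing: f₁ = c₁c₂c₄m²·exp(c₃f^{m+1})·f^{(m²−m−1)/(m+1)}·(f')², f₂ = c₂f^m, f₄ = c₄·exp(c₃f^{m+1})·f^{−m/(m+1)}, f₃ = f. Then f₂ satisfies the ODE f₂'' = ((f₂f₃f₄f₁' + f₁f₃f₄f₂' − f₁f₂f₄f₃' − f₁f₂f₃f₄')·f₂')/(2f₁f₂f₃f₄), provided c₁, c₂, c₄, m are nonzero. -/

import Mathlib

theorem stmt_17 (c₁ c₂ c₃ c₄ m : ℝ) (hm : m ≠ -1)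
    (hc₁ : c₁ ≠ 0) (hc₂ : c₂ ≠ 0) (hc₄ : c₄ ≠ 0) (hm0 : m ≠ 0)
    (a b : ℝ) (f : ℝ → ℝ)
    (hdiff : ∀ x ∈ Set.Ioo a b, DifferentiableAt ℝ f x ∧ DifferentiableAt ℝ (deriv f) x)
    (hpos : ∀ x ∈ Set.Ioo a b, 0 < f x)
    (hder : ∀ x ∈ Set.Ioo a b, deriv f x ≠ 0)
    (f₁ f₂ f₃ f₄ : ℝ → ℝ)
    (hf₁ : f₁ = fun x => c₁ * c₂ * c₄ * m ^ 2 * Real.exp (c₃ * f x ^ (m + 1)) *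
      f x ^ ((m ^ 2 - m - 1) / (m + 1)) * (deriv f x) ^ 2)
    (hf₂ : f₂ = fun x => c₂ * f x ^ m)
    (hf₃ : f₃ = f)
    (hf₄ : f₄ = fun x => c₄ * Real.exp (c₃ * f x ^ (m + 1)) * f x ^ (-(m / (m + 1)))) :
    ∀ x ∈ Set.Ioo a b,
      deriv (deriv f₂) x =
        (f₂ x * f₃ x * f₄ x * deriv f₁ x + f₁ x * f₃ x * f₄ x * deriv f₂ x
          - f₁ x * f₂ x * f₄ x * deriv f₃ x - f₁ x * f₂ x * f₃ x * deriv f₄ x) * deriv f₂ x /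
        (2 * f₁ x * f₂ x * f₃ x * f₄ x) := by
  intro x hx
  have hm1 : m + 1 ≠ 0 := fun h => hm (by linarith)
  have hu : 0 < f x := hpos x hx
  have hu0 : (f x) ≠ 0 := hu.ne'
  have hd0 : deriv f x ≠ 0 := hder x hx
  have Hf : HasDerivAt f (deriv f x) x := (hdiff x hx).1.hasDerivAt
  have Hd : HasDerivAt (deriv f) (deriv (deriv f) x) x := (hdiff x hx).2.hasDerivAt
  -- first derivative of f₂ on the interval
  have hD2 : ∀ y ∈ Set.Ioo a b,
      HasDerivAt f₂ (c₂ * (deriv f y * m * f y ^ (m - 1))) y := by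
    intro y hy
    rw [hf₂]
    exact (((hdiff y hy).1.hasDerivAt).rpow_const (Or.inl (hpos y hy).ne')).const_mul c₂
  have hd2x : deriv f₂ x = c₂ * (deriv f x * m * f x ^ (m - 1)) := (hD2 x hx).deriv
  -- second derivative of f₂ at x
  have heq : deriv f₂ =ᶠ[nhds x] fun y => c₂ * (deriv f y * m * f y ^ (m - 1)) := by
    filter_upwards [isOpen_Ioo.mem_nhds hx] with y hy using (hD2 y hy).deriv
  have hDD : HasDerivAt (fun y => c₂ * (deriv f y * m * f y ^ (m - 1)))
      (c₂ * ((deriv (deriv f) x * m) * f x ^ (m - 1) +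
        (deriv f x * m) * (deriv f x * (m - 1) * f x ^ (m - 1 - 1)))) x :=
    ((Hd.mul_const m).mul (Hf.rpow_const (Or.inl hu0))).const_mul c₂
  have hdd2 : deriv (deriv f₂) x = c₂ * ((deriv (deriv f) x * m) * f x ^ (m - 1) +
      (deriv f x * m) * (deriv f x * (m - 1) * f x ^ (m - 1 - 1))) := by
    rw [heq.deriv_eq]; exact hDD.deriv
  -- derivative of the exponential factor
  have HE : HasDerivAt (fun y => Real.exp (c₃ * f y ^ (m + 1)))
      (Real.exp (c₃ * f x ^ (m + 1)) * (c₃ * (deriv f x * (m + 1) * f x ^ (m + 1 - 1)))) x :=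
    ((Hf.rpow_const (Or.inl hu0)).const_mul c₃).exp
  -- derivative of f₁
  have HP : HasDerivAt (fun y => f y ^ ((m ^ 2 - m - 1) / (m + 1)))
      (deriv f x * ((m ^ 2 - m - 1) / (m + 1)) * f x ^ ((m ^ 2 - m - 1) / (m + 1) - 1)) x :=
    Hf.rpow_const (Or.inl hu0)
  have HDsq : HasDerivAt (fun y => (deriv f y) ^ 2)
      ((2 : ℕ) * (deriv f x) ^ 1 * deriv (deriv f) x) x := Hd.pow 2
  have H1 : HasDerivAt f₁
      (((c₁ * c₂ * c₄ * m ^ 2 *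
            (Real.exp (c₃ * f x ^ (m + 1)) * (c₃ * (deriv f x * (m + 1) * f x ^ (m + 1 - 1))))) *
          f x ^ ((m ^ 2 - m - 1) / (m + 1)) +
        (c₁ * c₂ * c₄ * m ^ 2 * Real.exp (c₃ * f x ^ (m + 1))) *
          (deriv f x * ((m ^ 2 - m - 1) / (m + 1)) *
            f x ^ ((m ^ 2 - m - 1) / (m + 1) - 1))) * (deriv f x) ^ 2 +
        (c₁ * c₂ * c₄ * m ^ 2 * Real.exp (c₃ * f x ^ (m + 1)) *
          f x ^ ((m ^ 2 - m - 1) / (m + 1))) *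
          ((2 : ℕ) * (deriv f x) ^ 1 * deriv (deriv f) x)) x := by
    rw [hf₁]
    exact ((HE.const_mul (c₁ * c₂ * c₄ * m ^ 2)).mul HP).mul HDsq
  have hd1x := H1.deriv
  -- derivative of f₄
  have HQ : HasDerivAt (fun y => f y ^ (-(m / (m + 1))))
      (deriv f x * (-(m / (m + 1))) * f x ^ (-(m / (m + 1)) - 1)) x :=
    Hf.rpow_const (Or.inl hu0)
  have H4 : HasDerivAt f₄
      ((c₄ * (Real.exp (c₃ * f x ^ (m + 1)) * (c₃ * (deriv f x * (m + 1) * f x ^ (m + 1 - 1))))) *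
          f x ^ (-(m / (m + 1))) +
        (c₄ * Real.exp (c₃ * f x ^ (m + 1))) *
          (deriv f x * (-(m / (m + 1))) * f x ^ (-(m / (m + 1)) - 1))) x := by
    rw [hf₄]
    exact (HE.const_mul c₄).mul HQ
  have hd4x := H4.deriv
  have hd3x : deriv f₃ x = deriv f x := by rw [hf₃]
  -- abbreviations
  set u := f x with hu_def
  set d := deriv f x with hd_def
  set dd := deriv (deriv f) x with hdd_def
  have hA0 : u ^ (m - 2) ≠ 0 := (Real.rpow_pos_of_pos hu _).ne'
  have hB0 : u ^ (-(m / (m + 1))) ≠ 0 := (Real.rpow_pos_of_pos hu _).ne'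
  have hE0 : Real.exp (c₃ * u ^ (m + 1)) ≠ 0 := Real.exp_ne_zero _
  have e1 : u ^ (m - 1) = u ^ (m - 2) * u := by
    rw [show m - 1 = (m - 2) + 1 by ring, Real.rpow_add hu, Real.rpow_one]
  have e2 : u ^ (m - 1 - 1) = u ^ (m - 2) := by rw [show m - 1 - 1 = m - 2 by ring]
  have e3 : u ^ (m + 1 - 1) = u ^ (m - 2) * u * u := by
    rw [show m + 1 - 1 = (m - 2) + 1 + 1 by ring, Real.rpow_add hu, Real.rpow_add hu,
      Real.rpow_one]
  have e4 : u ^ ((m ^ 2 - m - 1) / (m + 1)) = u ^ (m - 2) * u * u ^ (-(m / (m + 1))) := by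
    rw [show (m ^ 2 - m - 1) / (m + 1) = ((m - 2) + 1) + (-(m / (m + 1))) by
        field_simp; ring,
      Real.rpow_add hu, Real.rpow_add hu, Real.rpow_one]
  have e5 : u ^ ((m ^ 2 - m - 1) / (m + 1) - 1) = u ^ (m - 2) * u ^ (-(m / (m + 1))) := by
    rw [show (m ^ 2 - m - 1) / (m + 1) - 1 = (m - 2) + (-(m / (m + 1))) by
        field_simp; ring,
      Real.rpow_add hu]
  have e6 : u ^ (-(m / (m + 1)) - 1) = u ^ (-(m / (m + 1))) / u := by
    rw [Real.rpow_sub hu, Real.rpow_one]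
  have e7 : u ^ m = u ^ (m - 2) * u * u := by
    have h7 : u ^ m = u ^ ((m - 2) + 1 + 1) := by congr 1; ring
    rw [h7, Real.rpow_add hu, Real.rpow_add hu, Real.rpow_one]
  rw [hdd2, hd2x, hd1x, hd3x, hd4x]
  simp only [hf₁, hf₂, hf₃, hf₄]
  rw [← hu_def, ← hd_def]
  rw [e1, e2, e3, e4, e5, e6, e7]
  push_cast
  set A := u ^ (m - 2) with hA_def
  set B := u ^ (-(m / (m + 1))) with hB_def
  set E := Real.exp (c₃ * u ^ (m + 1)) with hE_def
  field_simp
  ring
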